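/- For independent real random variables X, X', Y, Y' with X' =_d X and Y' =_d Y and finite first moments, the energy distance E(X,Y) = 2·E|X−Y| − E|X−X'| − E|Y−Y'| is nonnegative, and equals 0 if X and Y have the same distribution. -/

import Mathlib

open MeasureTheory ProbabilityTheory Set
open scoped ENNReal

/-- For mutually independent real random variables `X, X', Y, Y'` with `X' =_d X`,
`Y' =_d Y` and finite first moments, the energy distance
`E(X,Y) = 2·E|X−Y| − E|X−X'| − E|Y−Y'|` is nonnegative, and equals `0` if `X` and `Y`
are identically distributed. -/
-- pointwise: ofReal |x - y| as lintegral of indicators over t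
lemma aux_pointwise (x y : ℝ) :
    ENNReal.ofReal |x - y| =
      ∫⁻ t, ((Iic t).indicator 1 x) * ((Ioi t).indicator 1 y)
            + ((Iic t).indicator 1 y) * ((Ioi t).indicator 1 x) := by
  have h1 : ∀ a b : ℝ, (fun t => ((Iic t).indicator (1 : ℝ → ℝ≥0∞) a) * ((Ioi t).indicator 1 b))
      = (Ico a b).indicator 1 := by
    intro a b
    ext t
    simp only [Set.indicator_apply, Set.mem_Iic, Set.mem_Ioi, Set.mem_Ico, Pi.one_apply]
    by_cases h : a ≤ t <;> by_cases h' : t < b <;> simp [h, h']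
  have h2 : ∀ a b : ℝ, ∫⁻ t, (Ico a b).indicator (1 : ℝ → ℝ≥0∞) t = ENNReal.ofReal (b - a) := by
    intro a b
    rw [lintegral_indicator_one measurableSet_Ico, Real.volume_Ico]
  rw [lintegral_add_left]
  · rw [show (fun t => ((Iic t).indicator (1 : ℝ → ℝ≥0∞) x) * ((Ioi t).indicator 1 y)) = (Ico x y).indicator 1 from h1 x y,
      show (fun t => ((Iic t).indicator (1 : ℝ → ℝ≥0∞) y) * ((Ioi t).indicator 1 x)) = (Ico y x).indicator 1 from h1 y x,
      h2, h2]
    rcases le_total x y with h | h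
    · rw [abs_of_nonpos (sub_nonpos.2 h), ENNReal.ofReal_of_nonpos (sub_nonpos.2 h), neg_sub, add_zero]
    · rw [abs_of_nonneg (sub_nonneg.2 h), ENNReal.ofReal_of_nonpos (sub_nonpos.2 h), zero_add]
  · rw [h1]
    exact (measurable_const.indicator measurableSet_Ico)

lemma aux_rep (ν ρ : Measure ℝ) [IsProbabilityMeasure ν] [IsProbabilityMeasure ρ] :
    ∫⁻ p : ℝ × ℝ, ENNReal.ofReal |p.1 - p.2| ∂(ν.prod ρ) =
      ∫⁻ t, ν (Iic t) * ρ (Ioi t) + ρ (Iic t) * ν (Ioi t) := by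
  have hmeas : AEMeasurable (Function.uncurry fun (p : ℝ × ℝ) (t : ℝ) =>
      ((Iic t).indicator (1 : ℝ → ℝ≥0∞) p.1) * ((Ioi t).indicator 1 p.2)
      + ((Iic t).indicator 1 p.2) * ((Ioi t).indicator 1 p.1)) ((ν.prod ρ).prod volume) := by
    have h : ∀ (f : ℝ × ℝ → ℝ), Measurable f →
        Measurable fun q : (ℝ × ℝ) × ℝ => (Iic q.2).indicator (1 : ℝ → ℝ≥0∞) (f q.1) := by
      intro f hf
      have : (fun q : (ℝ × ℝ) × ℝ => (Iic q.2).indicator (1 : ℝ → ℝ≥0∞) (f q.1))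
          = {q : (ℝ × ℝ) × ℝ | f q.1 ≤ q.2}.indicator 1 := by
        ext q
        simp [Set.indicator_apply]
      rw [this]
      exact measurable_const.indicator (measurableSet_le (hf.comp measurable_fst) measurable_snd)
    have h' : ∀ (f : ℝ × ℝ → ℝ), Measurable f →
        Measurable fun q : (ℝ × ℝ) × ℝ => (Ioi q.2).indicator (1 : ℝ → ℝ≥0∞) (f q.1) := by
      intro f hf
      have : (fun q : (ℝ × ℝ) × ℝ => (Ioi q.2).indicator (1 : ℝ → ℝ≥0∞) (f q.1))
          = {q : (ℝ × ℝ) × ℝ | q.2 < f q.1}.indicator 1 := by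
        ext q
        simp [Set.indicator_apply]
      rw [this]
      exact measurable_const.indicator (measurableSet_lt measurable_snd (hf.comp measurable_fst))
    exact (((h _ measurable_fst).mul (h' _ measurable_snd)).add
      ((h _ measurable_snd).mul (h' _ measurable_fst))).aemeasurable
  calc ∫⁻ p : ℝ × ℝ, ENNReal.ofReal |p.1 - p.2| ∂(ν.prod ρ)
      = ∫⁻ p : ℝ × ℝ, ∫⁻ t, ((Iic t).indicator (1 : ℝ → ℝ≥0∞) p.1) * ((Ioi t).indicator 1 p.2)
          + ((Iic t).indicator 1 p.2) * ((Ioi t).indicator 1 p.1) ∂volume ∂(ν.prod ρ) := by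
        congr 1; ext p; exact aux_pointwise p.1 p.2
    _ = ∫⁻ t, ∫⁻ p : ℝ × ℝ, ((Iic t).indicator (1 : ℝ → ℝ≥0∞) p.1) * ((Ioi t).indicator 1 p.2)
          + ((Iic t).indicator 1 p.2) * ((Ioi t).indicator 1 p.1) ∂(ν.prod ρ) ∂volume :=
        lintegral_lintegral_swap hmeas
    _ = ∫⁻ t, ν (Iic t) * ρ (Ioi t) + ρ (Iic t) * ν (Ioi t) := by
        congr 1; ext t
        have hind : ∀ (s u : Set ℝ), (fun p : ℝ × ℝ => s.indicator (1 : ℝ → ℝ≥0∞) p.1 * u.indicator 1 p.2)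
            = (s ×ˢ u).indicator 1 := by
          intro s u
          ext p
          exact (Set.indicator_prod_one (i := p.1) (j := p.2)).symm
        rw [lintegral_add_left]
        · rw [show (fun p : ℝ × ℝ => (Iic t).indicator (1 : ℝ → ℝ≥0∞) p.2 * (Ioi t).indicator 1 p.1)
              = fun p : ℝ × ℝ => (Ioi t).indicator (1 : ℝ → ℝ≥0∞) p.1 * (Iic t).indicator 1 p.2 from
              funext fun p => mul_comm _ _,
            hind, hind,
            lintegral_indicator_one (measurableSet_Iic.prod measurableSet_Ioi),
            lintegral_indicator_one (measurableSet_Ioi.prod measurableSet_Iic),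
            Measure.prod_prod, Measure.prod_prod]
          ring
        · exact ((measurable_const.indicator measurableSet_Iic).comp measurable_fst).mul
            ((measurable_const.indicator measurableSet_Ioi).comp measurable_snd)

lemma aux_enn {a b a' b' : ℝ≥0∞} (ha : a + a' = 1) (hb : b + b' = 1) :
    a * a' + a * a' + (b * b' + b * b') ≤ 2 * (a * b' + b * a') := by
  have haT : a ≠ ⊤ := fun h => by simp [h] at ha
  have ha'T : a' ≠ ⊤ := fun h => by simp [h] at ha
  have hbT : b ≠ ⊤ := fun h => by simp [h] at hb
  have hb'T : b' ≠ ⊤ := fun h => by simp [h] at hb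
  have h1 : a.toReal + a'.toReal = 1 := by
    rw [← ENNReal.toReal_add haT ha'T, ha]; simp
  have h2 : b.toReal + b'.toReal = 1 := by
    rw [← ENNReal.toReal_add hbT hb'T, hb]; simp
  rw [← ENNReal.toReal_le_toReal (by finiteness) (by finiteness)]
  rw [ENNReal.toReal_add (by finiteness) (by finiteness),
    ENNReal.toReal_add (by finiteness) (by finiteness),
    ENNReal.toReal_add (by finiteness) (by finiteness),
    ENNReal.toReal_mul, ENNReal.toReal_mul, ENNReal.toReal_mul,
    ENNReal.toReal_add (by finiteness) (by finiteness), ENNReal.toReal_mul, ENNReal.toReal_mul]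
  have h0a := ENNReal.toReal_nonneg (a := a)
  have h0b := ENNReal.toReal_nonneg (a := b)
  simp only [ENNReal.toReal_ofNat]
  nlinarith [sq_nonneg (a.toReal - b.toReal)]

lemma aux_main {Ω : Type*} [MeasurableSpace Ω] (μ : Measure Ω) [IsProbabilityMeasure μ]
    {f g : Ω → ℝ} (hf : Measurable f) (hg : Measurable g) (hfg : IndepFun f g μ) :
    ∫⁻ ω, ENNReal.ofReal |f ω - g ω| ∂μ =
      ∫⁻ t, (μ.map f) (Iic t) * (μ.map g) (Ioi t) + (μ.map g) (Iic t) * (μ.map f) (Ioi t) := by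
  have hmap := (indepFun_iff_map_prod_eq_prod_map_map hf.aemeasurable hg.aemeasurable).mp hfg
  have h1 : IsProbabilityMeasure (μ.map f) := Measure.isProbabilityMeasure_map hf.aemeasurable
  have h2 : IsProbabilityMeasure (μ.map g) := Measure.isProbabilityMeasure_map hg.aemeasurable
  rw [← aux_rep, ← hmap,
    lintegral_map (f := fun p : ℝ × ℝ => ENNReal.ofReal |p.1 - p.2|) ((measurable_fst.sub measurable_snd).abs.ennreal_ofReal) (hf.prodMk hg)]

lemma aux_int {Ω : Type*} [MeasurableSpace Ω] (μ : Measure Ω) {f g : Ω → ℝ}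
    (hf : Measurable f) (hg : Measurable g) :
    ∫ ω, |f ω - g ω| ∂μ = (∫⁻ ω, ENNReal.ofReal |f ω - g ω| ∂μ).toReal :=
  integral_eq_lintegral_of_nonneg_ae (Filter.Eventually.of_forall fun ω => abs_nonneg _)
    ((hf.sub hg).abs.aestronglyMeasurable)

lemma aux_fin {Ω : Type*} [MeasurableSpace Ω] (μ : Measure Ω) {f g : Ω → ℝ}
    (hif : Integrable f μ) (hig : Integrable g μ) :
    ∫⁻ ω, ENNReal.ofReal |f ω - g ω| ∂μ ≠ ⊤ := by
  have h := (hif.sub hig).2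
  rw [hasFiniteIntegral_iff_norm] at h
  simp only [Pi.sub_apply, Real.norm_eq_abs] at h
  exact h.ne


theorem stmt_8 {Ω : Type*} [MeasurableSpace Ω] (μ : Measure Ω) [IsProbabilityMeasure μ]
    (X X' Y Y' : Ω → ℝ)
    (hmX : Measurable X) (hmX' : Measurable X') (hmY : Measurable Y) (hmY' : Measurable Y')
    (hindep : iIndepFun ![X, X', Y, Y'] μ)
    (hX' : Measure.map X' μ = Measure.map X μ) (hY' : Measure.map Y' μ = Measure.map Y μ)
    (hiX : Integrable X μ) (hiY : Integrable Y μ)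
    (E : ℝ)
    (hE : E = 2 * ∫ ω, |X ω - Y ω| ∂μ - ∫ ω, |X ω - X' ω| ∂μ - ∫ ω, |Y ω - Y' ω| ∂μ) :
    0 ≤ E ∧ (Measure.map X μ = Measure.map Y μ → E = 0) := by
  -- integrability of X', Y'
  have hiX' : Integrable X' μ := by
    have h1 : Integrable id (μ.map X) :=
      (integrable_map_measure aestronglyMeasurable_id hmX.aemeasurable).mpr hiX
    rw [← hX'] at h1
    exact (integrable_map_measure aestronglyMeasurable_id hmX'.aemeasurable).mp h1
  have hiY' : Integrable Y' μ := by
    have h1 : Integrable id (μ.map Y) :=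
      (integrable_map_measure aestronglyMeasurable_id hmY.aemeasurable).mpr hiY
    rw [← hY'] at h1
    exact (integrable_map_measure aestronglyMeasurable_id hmY'.aemeasurable).mp h1
  -- pairwise independence
  have hXY : IndepFun X Y μ := hindep.indepFun (show (0 : Fin 4) ≠ 2 by decide)
  have hXX' : IndepFun X X' μ := hindep.indepFun (show (0 : Fin 4) ≠ 1 by decide)
  have hYY' : IndepFun Y Y' μ := hindep.indepFun (show (2 : Fin 4) ≠ 3 by decide)
  -- lintegral quantities
  set A := ∫⁻ ω, ENNReal.ofReal |X ω - Y ω| ∂μ with hA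
  set B := ∫⁻ ω, ENNReal.ofReal |X ω - X' ω| ∂μ with hB
  set C := ∫⁻ ω, ENNReal.ofReal |Y ω - Y' ω| ∂μ with hC
  have repA : A = ∫⁻ t, (μ.map X) (Iic t) * (μ.map Y) (Ioi t)
      + (μ.map Y) (Iic t) * (μ.map X) (Ioi t) := aux_main μ hmX hmY hXY
  have repB : B = ∫⁻ t, (μ.map X) (Iic t) * (μ.map X) (Ioi t)
      + (μ.map X) (Iic t) * (μ.map X) (Ioi t) := by
    rw [hB, aux_main μ hmX hmX' hXX', hX']
  have repC : C = ∫⁻ t, (μ.map Y) (Iic t) * (μ.map Y) (Ioi t)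
      + (μ.map Y) (Iic t) * (μ.map Y) (Ioi t) := by
    rw [hC, aux_main μ hmY hmY' hYY', hY']
  -- finiteness
  have hAfin : A ≠ ⊤ := aux_fin μ hiX hiY
  have hBfin : B ≠ ⊤ := aux_fin μ hiX hiX'
  have hCfin : C ≠ ⊤ := aux_fin μ hiY hiY'
  -- real integrals as toReal
  have intA : ∫ ω, |X ω - Y ω| ∂μ = A.toReal := aux_int μ hmX hmY
  have intB : ∫ ω, |X ω - X' ω| ∂μ = B.toReal := aux_int μ hmX hmX'
  have intC : ∫ ω, |Y ω - Y' ω| ∂μ = C.toReal := aux_int μ hmY hmY'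
  -- CDF complements sum to 1
  have hsum : ∀ (ν : Measure ℝ) [IsProbabilityMeasure ν] (t : ℝ),
      ν (Iic t) + ν (Ioi t) = 1 := by
    intro ν _ t
    rw [← Set.compl_Iic, measure_add_measure_compl measurableSet_Iic, measure_univ]
  have hPX : IsProbabilityMeasure (μ.map X) := Measure.isProbabilityMeasure_map hmX.aemeasurable
  have hPY : IsProbabilityMeasure (μ.map Y) := Measure.isProbabilityMeasure_map hmY.aemeasurable
  -- key inequality B + C ≤ 2 * A
  have hmeasX : Measurable fun t => (μ.map X) (Iic t) * (μ.map X) (Ioi t)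
      + (μ.map X) (Iic t) * (μ.map X) (Ioi t) := by
    have h1 : Measurable fun t => (μ.map X) (Iic t) :=
      Monotone.measurable fun s t hst => measure_mono (Iic_subset_Iic.2 hst)
    have h2 : Measurable fun t => (μ.map X) (Ioi t) :=
      Antitone.measurable fun s t hst => measure_mono (Ioi_subset_Ioi hst)
    exact (h1.mul h2).add (h1.mul h2)
  have hkey : B + C ≤ 2 * A := by
    rw [repA, repB, repC, ← lintegral_const_mul' _ _ (by norm_num : (2 : ℝ≥0∞) ≠ ⊤),
      ← lintegral_add_left hmeasX]
    exact lintegral_mono fun t => aux_enn (hsum (μ.map X) t) (hsum (μ.map Y) t)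
  constructor
  · have h2A : (2 * A) ≠ ⊤ := ENNReal.mul_ne_top (by norm_num) hAfin
    have := (ENNReal.toReal_le_toReal (by finiteness) h2A).mpr hkey
    rw [ENNReal.toReal_add hBfin hCfin, ENNReal.toReal_mul, ENNReal.toReal_ofNat] at this
    rw [hE, intA, intB, intC]
    linarith
  · intro h
    have eAB : A = B := by rw [repA, repB, h]
    have eAC : A = C := by rw [repA, repC, h]
    rw [hE, intA, intB, intC, ← eAB, ← eAC]
    ring
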